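/- The Sinkhorn scaling of a strictly positive kernel satisfies the prescribed marginals exactly at a fixed point: if u, v are positive vectors such that R = diag(u)·A·diag(v) has row sums r and column sums c, then R is the unique element of the transportation polytope U(r,c) of the form diag(u)·A·diag(v), up to the scaling (u,v) ↦ (λu, v/λ). -/

import Mathlib

/-- Uniqueness of Sinkhorn scalings of a strictly positive kernel: if both
`diag(u) A diag(v)` and `diag(u') A diag(v')` lie in the transportation
polytope `U(r,c)` (row sums `r`, column sums `c`), with all scaling vectors
positive, then `(u',v') = (λu, v/λ)` for some `λ > 0`, and hence the two
scaled matrices coincide. -/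
theorem sinkhorn_scaling_unique
    {m n : ℕ}
    (A : Fin m → Fin n → ℝ) (hA : ∀ i j, 0 < A i j)
    (r : Fin m → ℝ) (c : Fin n → ℝ)
    (hr : ∀ i, 0 < r i) (hc : ∀ j, 0 < c j)
    (hrc : ∑ i : Fin m, r i = ∑ j : Fin n, c j)
    (u : Fin m → ℝ) (v : Fin n → ℝ) (u' : Fin m → ℝ) (v' : Fin n → ℝ)
    (hu : ∀ i, 0 < u i) (hv : ∀ j, 0 < v j)
    (hu' : ∀ i, 0 < u' i) (hv' : ∀ j, 0 < v' j)
    (hrow : ∀ i, ∑ j : Fin n, u i * A i j * v j = r i)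
    (hcol : ∀ j, ∑ i : Fin m, u i * A i j * v j = c j)
    (hrow' : ∀ i, ∑ j : Fin n, u' i * A i j * v' j = r i)
    (hcol' : ∀ j, ∑ i : Fin m, u' i * A i j * v' j = c j) :
    ∃ lam : ℝ, 0 < lam ∧ (∀ i, u' i = lam * u i) ∧ (∀ j, v' j = v j / lam) ∧
      ∀ i j, u' i * A i j * v' j = u i * A i j * v j := by
  rcases Nat.eq_zero_or_pos m with hm | hm
  · -- m = 0
    rcases Nat.eq_zero_or_pos n with hn | hn
    · refine ⟨1, one_pos, ?_, ?_, ?_⟩ <;> intro i <;> exact absurd i.is_lt (by omega)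
    · exfalso
      have h1 : (0:ℝ) < ∑ j : Fin n, c j :=
        Finset.sum_pos (fun j _ => hc j) ⟨⟨0, hn⟩, Finset.mem_univ _⟩
      subst hm
      simp at hrc
      linarith
  · -- m ≥ 1
    have hn : 0 < n := by
      by_contra hncon
      have hne : n = 0 := by omega
      subst hne
      have h0 := hrow ⟨0, hm⟩
      simp at h0
      linarith [hr ⟨0, hm⟩]
    set α : Fin m → ℝ := fun i => u' i / u i with hα
    set β : Fin n → ℝ := fun j => v' j / v j with hβ
    have hαpos : ∀ i, 0 < α i := fun i => div_pos (hu' i) (hu i)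
    have hβpos : ∀ j, 0 < β j := fun j => div_pos (hv' j) (hv j)
    have htpos : ∀ i j, 0 < u i * A i j * v j :=
      fun i j => mul_pos (mul_pos (hu i) (hA i j)) (hv j)
    have hkey : ∀ i j, u' i * A i j * v' j = α i * β j * (u i * A i j * v j) := by
      intro i j
      show u' i * A i j * v' j = u' i / u i * (v' j / v j) * (u i * A i j * v j)
      rw [div_mul_div_comm, div_mul_eq_mul_div, eq_div_iff (mul_ne_zero (hu i).ne' (hv j).ne')]
      ring
    obtain ⟨i0, _, hi0⟩ := Finset.exists_max_image Finset.univ α ⟨⟨0, hm⟩, Finset.mem_univ _⟩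
    set lam := α i0 with hlam
    have hlampos : 0 < lam := hαpos i0
    have hαle : ∀ i, α i ≤ lam := fun i => hi0 i (Finset.mem_univ i)
    -- step 1: lam * β j ≥ 1 for all j
    have step1 : ∀ j, 1 ≤ lam * β j := by
      intro j
      have h1 : ∑ i : Fin m, α i * β j * (u i * A i j * v j)
          ≤ ∑ i : Fin m, lam * β j * (u i * A i j * v j) := by
        apply Finset.sum_le_sum
        intro i _
        have ht := htpos i j
        have hh := mul_le_mul_of_nonneg_right (hαle i) (le_of_lt (mul_pos (hβpos j) ht))
        nlinarith [hh]
      have h2 : ∑ i : Fin m, α i * β j * (u i * A i j * v j) = c j := by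
        rw [← hcol' j]; exact Finset.sum_congr rfl fun i _ => (hkey i j).symm
      have h3 : ∑ i : Fin m, lam * β j * (u i * A i j * v j)
          = lam * β j * c j := by rw [← Finset.mul_sum, hcol j]
      nlinarith [hc j, h1, h2, h3]
    -- step 2: from row i0, lam * β j = 1 for all j
    have step2 : ∀ j, lam * β j = 1 := by
      have h2 : ∑ j : Fin n, lam * β j * (u i0 * A i0 j * v j) = r i0 := by
        rw [← hrow' i0]
        exact Finset.sum_congr rfl fun j _ => (hkey i0 j).symm
      have h3 : ∑ j : Fin n, (u i0 * A i0 j * v j) = r i0 := hrow i0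
      have hle : ∀ j ∈ (Finset.univ : Finset (Fin n)),
          (u i0 * A i0 j * v j) ≤ lam * β j * (u i0 * A i0 j * v j) := by
        intro j _
        nlinarith [step1 j, htpos i0 j]
      have heq := (Finset.sum_eq_sum_iff_of_le hle).mp (h3.trans h2.symm)
      intro j
      have h4 := heq j (Finset.mem_univ j)
      have ht := htpos i0 j
      have h5 : (lam * β j - 1) * (u i0 * A i0 j * v j) = 0 := by linarith
      rcases mul_eq_zero.mp h5 with h | h
      · linarith
      · exact absurd h ht.ne'
    have hβval : ∀ j, β j = 1 / lam := by
      intro j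
      field_simp
      linarith [step2 j]
    -- step 3: α i = lam for all i, using column j0
    have j0 : Fin n := ⟨0, hn⟩
    have step3 : ∀ i, α i = lam := by
      have h2 : ∑ i : Fin m, (α i / lam) * (u i * A i j0 * v j0) = c j0 := by
        rw [← hcol' j0]
        refine Finset.sum_congr rfl fun i _ => ?_
        rw [hkey i j0, hβval j0]
        ring
      have h3 : ∑ i : Fin m, (u i * A i j0 * v j0) = c j0 := hcol j0
      have hle : ∀ i ∈ (Finset.univ : Finset (Fin m)),
          (α i / lam) * (u i * A i j0 * v j0) ≤ (u i * A i j0 * v j0) := by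
        intro i _
        have hd1 : α i / lam ≤ 1 := (div_le_one hlampos).mpr (hαle i)
        nlinarith [htpos i j0]
      have heq := (Finset.sum_eq_sum_iff_of_le hle).mp (h2.trans h3.symm)
      intro i
      have h4 := heq i (Finset.mem_univ i)
      have ht := htpos i j0
      have h5 : (α i / lam - 1) * (u i * A i j0 * v j0) = 0 := by linarith
      have hdiv : α i / lam = 1 := by
        rcases mul_eq_zero.mp h5 with h | h
        · linarith
        · exact absurd h ht.ne'
      have := (div_eq_one_iff_eq hlampos.ne').mp hdiv
      exact this
    refine ⟨lam, hlampos, ?_, ?_, ?_⟩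
    · intro i
      have h := step3 i
      have h1 : u' i = α i * u i := (div_mul_cancel₀ (u' i) (hu i).ne').symm
      rw [h1, h]
    · intro j
      have h1 : v' j = β j * v j := (div_mul_cancel₀ (v' j) (hv j).ne').symm
      rw [h1, hβval j]
      ring
    · intro i j
      rw [hkey i j, step3 i, hβval j]
      field_simp
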